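/- Let T be a densely defined operator on H₁ ⊕ H₂ of block form T(x,y) = (B y, C x) with mutually adjoint entries B and C as above. If T² is essentially self-adjoint on D(C) ⊕ D(B) (where T²(x,y) = (BC x, CB y)), then the operator BC is essentially self-adjoint on D(C) ∩ C⁻¹(D(B)). -/

import Mathlib

open scoped LinearPMap ComplexInnerProductSpace

lemma mem_adjoint_graph_iff' {E F : Type*} [NormedAddCommGroup E] [InnerProductSpace ℂ E]
    [NormedAddCommGroup F] [InnerProductSpace ℂ F] [CompleteSpace E]
    {A : E →ₗ.[ℂ] F} (hA : Dense (A.domain : Set E)) (u : F) (v : E) :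
    (u, v) ∈ A.adjoint.graph ↔ ∀ x : A.domain, ⟪A x, u⟫ = ⟪(x : E), v⟫ := by
  constructor
  · intro h
    have hu : u ∈ A.adjoint.domain := LinearPMap.mem_domain_of_mem_graph h
    have hv : v = A.adjoint ⟨u, hu⟩ := (LinearPMap.image_iff hu).mpr h
    intro x
    have h2 := LinearPMap.adjoint_isFormalAdjoint hA ⟨u, hu⟩ x
    rw [← hv] at h2
    rw [← inner_conj_symm, ← h2, inner_conj_symm]
  · intro h
    have hu : u ∈ A.adjoint.domain := by
      refine LinearPMap.mem_adjoint_domain_of_exists _ ⟨v, fun x => ?_⟩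
      rw [← inner_conj_symm, ← h x, inner_conj_symm]
    have hv : A.adjoint ⟨u, hu⟩ = v := by
      refine LinearPMap.adjoint_apply_eq hA _ fun x => ?_
      rw [← inner_conj_symm, ← h x, inner_conj_symm]
    exact (LinearPMap.image_iff hu).mp hv.symm

lemma isClosable_of_symmetric' {E : Type*} [NormedAddCommGroup E] [InnerProductSpace ℂ E]
    {A : E →ₗ.[ℂ] E} (hd : Dense (A.domain : Set E))
    (hsym : ∀ x y : A.domain, ⟪A x, (y : E)⟫ = ⟪(x : E), A y⟫) : A.IsClosable := by
  have key : ∀ (x : E × E) (_hx : x ∈ A.graph.topologicalClosure) (_hx' : x.fst = 0),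
      x.snd = 0 := by
    intro x hx hx'
    rw [← SetLike.mem_coe, Submodule.topologicalClosure_coe] at hx
    refine hd.eq_zero_of_inner_left ℂ fun y' hy' => ?_
    let y : A.domain := ⟨y', hy'⟩
    have hvanish : ∀ z ∈ (A.graph : Set (E × E)), ⟪z.2, (y : E)⟫ - ⟪z.1, A y⟫ = (0 : ℂ) := by
      intro z hz
      rw [SetLike.mem_coe, LinearPMap.mem_graph_iff'] at hz
      obtain ⟨w, rfl⟩ := hz
      simp only [sub_eq_zero]
      exact hsym w y
    have hc : Continuous fun z : E × E => ⟪z.2, (y : E)⟫ - ⟪z.1, A y⟫ :=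
      ((continuous_snd.inner continuous_const).sub (continuous_fst.inner continuous_const))
    have hsub : closure (A.graph : Set (E × E)) ⊆
        {w : E × E | ⟪w.2, (y : E)⟫ - ⟪w.1, A y⟫ = (0 : ℂ)} :=
      closure_minimal hvanish (isClosed_eq hc continuous_const)
    have := hsub hx
    rw [Set.mem_setOf_eq, hx', inner_zero_left, sub_zero] at this
    exact this
  exact ⟨A.graph.topologicalClosure.toLinearPMap,
    (Submodule.toLinearPMap_graph_eq _ key).symm⟩


/-- An unbounded operator is essentially self-adjoint if its closure is self-adjoint. -/
def EssentiallySelfAdjoint {E : Type*} [NormedAddCommGroup E] [InnerProductSpace ℂ E]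
    [CompleteSpace E] (A : E →ₗ.[ℂ] E) : Prop :=
  A.closure.adjoint = A.closure

/-- if the square `T²(x,y) = (BC x, CB y)` of the block operator
`T(x,y) = (B y, C x)` is essentially self-adjoint on `D(C) ⊕ D(B)` (inside the Hilbert
direct sum `H₁ ⊕ H₂`), then `BC` is essentially self-adjoint on `D(C) ∩ C⁻¹(D(B))`. -/
theorem block_square_essentiallySelfAdjoint_implies_BC
    {H₁ H₂ : Type*} [NormedAddCommGroup H₁] [InnerProductSpace ℂ H₁] [CompleteSpace H₁]
    [NormedAddCommGroup H₂] [InnerProductSpace ℂ H₂] [CompleteSpace H₂]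
    (D₁ : Submodule ℂ H₁) (D₂ : Submodule ℂ H₂)
    (hD₁ : Dense (D₁ : Set H₁)) (hD₂ : Dense (D₂ : Set H₂))
    (C : D₁ →ₗ[ℂ] H₂) (B : D₂ →ₗ[ℂ] H₁)
    (hadj : ∀ (x : D₁) (y : D₂), ⟪C x, (y : H₂)⟫ = ⟪(x : H₁), B y⟫)
    (hCB : ∀ x : D₁, C x ∈ D₂) (hBC : ∀ y : D₂, B y ∈ D₁)
    -- `T²` as a partially defined operator on the Hilbert direct sum `H₁ ⊕ H₂`:
    (T : WithLp 2 (H₁ × H₂) →ₗ.[ℂ] WithLp 2 (H₁ × H₂))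
    (hTdom : ∀ z : WithLp 2 (H₁ × H₂), z ∈ T.domain ↔
      (WithLp.equiv 2 (H₁ × H₂) z).1 ∈ D₁ ∧ (WithLp.equiv 2 (H₁ × H₂) z).2 ∈ D₂)
    (hT : ∀ (z : T.domain) (h₁ : (WithLp.equiv 2 (H₁ × H₂) (z : WithLp 2 (H₁ × H₂))).1 ∈ D₁)
        (h₂ : (WithLp.equiv 2 (H₁ × H₂) (z : WithLp 2 (H₁ × H₂))).2 ∈ D₂),
        WithLp.equiv 2 (H₁ × H₂) (T z) =
          (B ⟨C ⟨(WithLp.equiv 2 (H₁ × H₂) (z : WithLp 2 (H₁ × H₂))).1, h₁⟩,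
              hCB ⟨(WithLp.equiv 2 (H₁ × H₂) (z : WithLp 2 (H₁ × H₂))).1, h₁⟩⟩,
           C ⟨B ⟨(WithLp.equiv 2 (H₁ × H₂) (z : WithLp 2 (H₁ × H₂))).2, h₂⟩,
              hBC ⟨(WithLp.equiv 2 (H₁ × H₂) (z : WithLp 2 (H₁ × H₂))).2, h₂⟩⟩))
    (hTsa : EssentiallySelfAdjoint T)
    -- the operator `BC` defined on `D(C) ∩ C⁻¹(D(B))`:
    (S : H₁ →ₗ.[ℂ] H₁)
    (hSdom : ∀ x : H₁, x ∈ S.domain ↔ ∃ hx : x ∈ D₁, C ⟨x, hx⟩ ∈ D₂)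
    (hS : ∀ (x : S.domain) (hx : (x : H₁) ∈ D₁) (hCx : C ⟨(x : H₁), hx⟩ ∈ D₂),
        S x = B ⟨C ⟨(x : H₁), hx⟩, hCx⟩) :
    EssentiallySelfAdjoint S := by
  classical
  -- the domain of `S` is `D₁`
  have hSdomD : S.domain = D₁ := by
    ext x
    rw [hSdom]
    exact ⟨fun ⟨hx, _⟩ => hx, fun hx => ⟨hx, hCB _⟩⟩
  -- two key symmetry identities
  have key₁ : ∀ (a b : D₁), ⟪(B ⟨C a, hCB a⟩ : H₁), (b : H₁)⟫ = ⟪(a : H₁), B ⟨C b, hCB b⟩⟫ := by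
    intro a b
    have h1 := hadj b ⟨C a, hCB a⟩
    have h2 := hadj a ⟨C b, hCB b⟩
    calc ⟪(B ⟨C a, hCB a⟩ : H₁), (b : H₁)⟫
        = starRingEnd ℂ ⟪(b : H₁), B ⟨C a, hCB a⟩⟫ := (inner_conj_symm _ _).symm
      _ = starRingEnd ℂ ⟪C b, ((⟨C a, hCB a⟩ : D₂) : H₂)⟫ := by rw [h1]
      _ = ⟪C a, C b⟫ := by rw [inner_conj_symm]
      _ = ⟪(a : H₁), B ⟨C b, hCB b⟩⟫ := h2
  have key₂ : ∀ (a b : D₂), ⟪(C ⟨B a, hBC a⟩ : H₂), (b : H₂)⟫ = ⟪(a : H₂), C ⟨B b, hBC b⟩⟫ := by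
    intro a b
    have h1 := hadj ⟨B a, hBC a⟩ b
    have h2 := hadj ⟨B b, hBC b⟩ a
    calc ⟪(C ⟨B a, hBC a⟩ : H₂), (b : H₂)⟫
        = ⟪(B a : H₁), B b⟫ := h1
      _ = starRingEnd ℂ ⟪(B b : H₁), B a⟫ := (inner_conj_symm _ _).symm
      _ = starRingEnd ℂ ⟪C ⟨B b, hBC b⟩, (a : H₂)⟫ := by rw [h2]
      _ = ⟪(a : H₂), C ⟨B b, hBC b⟩⟫ := inner_conj_symm _ _
  -- symmetry of S
  have hSsym : ∀ x y : S.domain, ⟪S x, (y : H₁)⟫ = ⟪(x : H₁), S y⟫ := by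
    intro x y
    have hx₁ : (x : H₁) ∈ D₁ := hSdomD ▸ x.2
    have hy₁ : (y : H₁) ∈ D₁ := hSdomD ▸ y.2
    rw [hS x hx₁ (hCB _), hS y hy₁ (hCB _)]
    exact key₁ ⟨x, hx₁⟩ ⟨y, hy₁⟩
  -- symmetry of T
  have hTsym : ∀ z w : T.domain, ⟪T z, (w : (WithLp 2 (H₁ × H₂)))⟫ = ⟪(z : (WithLp 2 (H₁ × H₂))), T w⟫ := by
    intro z w
    obtain ⟨hz₁, hz₂⟩ := (hTdom z).1 z.2
    obtain ⟨hw₁, hw₂⟩ := (hTdom w).1 w.2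
    have hTz := hT z hz₁ hz₂
    have hTw := hT w hw₁ hw₂
    have hTz1 : (T z : (WithLp 2 (H₁ × H₂))).fst = B ⟨C ⟨((WithLp.equiv 2 (H₁ × H₂)) (z : (WithLp 2 (H₁ × H₂)))).1, hz₁⟩, hCB _⟩ := by
      exact congrArg Prod.fst hTz
    have hTz2 : (T z : (WithLp 2 (H₁ × H₂))).snd = C ⟨B ⟨((WithLp.equiv 2 (H₁ × H₂)) (z : (WithLp 2 (H₁ × H₂)))).2, hz₂⟩, hBC _⟩ := by
      exact congrArg Prod.snd hTz
    have hTw1 : (T w : (WithLp 2 (H₁ × H₂))).fst = B ⟨C ⟨((WithLp.equiv 2 (H₁ × H₂)) (w : (WithLp 2 (H₁ × H₂)))).1, hw₁⟩, hCB _⟩ := by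
      exact congrArg Prod.fst hTw
    have hTw2 : (T w : (WithLp 2 (H₁ × H₂))).snd = C ⟨B ⟨((WithLp.equiv 2 (H₁ × H₂)) (w : (WithLp 2 (H₁ × H₂)))).2, hw₂⟩, hBC _⟩ := by
      exact congrArg Prod.snd hTw
    rw [WithLp.prod_inner_apply, WithLp.prod_inner_apply]
    simp only [WithLp.ofLp_fst, WithLp.ofLp_snd]
    rw [hTz1, hTz2, hTw1, hTw2]
    have e1 : ((w : (WithLp 2 (H₁ × H₂))).fst : H₁) = ((⟨((WithLp.equiv 2 (H₁ × H₂)) (w : (WithLp 2 (H₁ × H₂)))).1, hw₁⟩ : D₁) : H₁) := by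
      rfl
    have e2 : ((w : (WithLp 2 (H₁ × H₂))).snd : H₂) = ((⟨((WithLp.equiv 2 (H₁ × H₂)) (w : (WithLp 2 (H₁ × H₂)))).2, hw₂⟩ : D₂) : H₂) := by
      rfl
    have e3 : ((z : (WithLp 2 (H₁ × H₂))).fst : H₁) = ((⟨((WithLp.equiv 2 (H₁ × H₂)) (z : (WithLp 2 (H₁ × H₂)))).1, hz₁⟩ : D₁) : H₁) := by
      rfl
    have e4 : ((z : (WithLp 2 (H₁ × H₂))).snd : H₂) = ((⟨((WithLp.equiv 2 (H₁ × H₂)) (z : (WithLp 2 (H₁ × H₂)))).2, hz₂⟩ : D₂) : H₂) := by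
      rfl
    rw [e1, e2, e3, e4, key₁, key₂]
  -- density
  have hdS : Dense (S.domain : Set H₁) := by rw [hSdomD]; exact hD₁
  have hdT : Dense (T.domain : Set (WithLp 2 (H₁ × H₂))) := by
    have hdense : Dense ((D₁ : Set H₁) ×ˢ (D₂ : Set H₂)) := hD₁.prod hD₂
    have heq : (T.domain : Set (WithLp 2 (H₁ × H₂))) = (WithLp.equiv 2 (H₁ × H₂)) ⁻¹' ((D₁ : Set H₁) ×ˢ (D₂ : Set H₂)) := by
      ext z
      rw [SetLike.mem_coe, hTdom]
      simp [Set.mem_prod]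
    rw [heq]
    have hmap : IsOpenMap ((WithLp.equiv 2 (H₁ × H₂)) : (WithLp 2 (H₁ × H₂)) → H₁ × H₂) :=
      (WithLp.prodContinuousLinearEquiv 2 ℂ H₁ H₂).toHomeomorph.isOpenMap
    exact hdense.preimage hmap
  -- closability
  have hScl : S.IsClosable := isClosable_of_symmetric' hdS hSsym
  have hTcl : T.IsClosable := isClosable_of_symmetric' hdT hTsym
  -- density of closure domains
  have hdSc : Dense (S.closure.domain : Set H₁) :=
    hdS.mono (S.le_closure.1 : (S.domain : Set H₁) ⊆ S.closure.domain)
  have hdTc : Dense (T.closure.domain : Set (WithLp 2 (H₁ × H₂))) :=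
    hdT.mono (T.le_closure.1 : (T.domain : Set (WithLp 2 (H₁ × H₂))) ⊆ T.closure.domain)
  -- the two graph mapping claims
  set Φ : (WithLp 2 (H₁ × H₂)) × (WithLp 2 (H₁ × H₂)) → H₁ × H₁ := fun p => (((WithLp.equiv 2 (H₁ × H₂)) p.1).1, ((WithLp.equiv 2 (H₁ × H₂)) p.2).1) with hΦ
  have hΦc : Continuous Φ := by
    have h : Continuous (WithLp.equiv 2 (H₁ × H₂)) := WithLp.prod_continuous_ofLp ..
    exact ((h.comp continuous_fst).fst).prodMk ((h.comp continuous_snd).fst)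
  have hsubA : Φ '' (T.graph : Set ((WithLp 2 (H₁ × H₂)) × (WithLp 2 (H₁ × H₂)))) ⊆ (S.graph : Set (H₁ × H₁)) := by
    rintro _ ⟨p, hp, rfl⟩
    rw [SetLike.mem_coe, LinearPMap.mem_graph_iff'] at hp
    obtain ⟨z, rfl⟩ := hp
    obtain ⟨h₁, h₂⟩ := (hTdom z).1 z.2
    have hTz1 : ((WithLp.equiv 2 (H₁ × H₂)) (T z)).1 = B ⟨C ⟨((WithLp.equiv 2 (H₁ × H₂)) (z : (WithLp 2 (H₁ × H₂)))).1, h₁⟩, hCB _⟩ := by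
      rw [hT z h₁ h₂]
    have hx : ((WithLp.equiv 2 (H₁ × H₂)) (z : (WithLp 2 (H₁ × H₂)))).1 ∈ S.domain := hSdomD.symm ▸ h₁
    rw [SetLike.mem_coe]
    refine (LinearPMap.image_iff hx).mp ?_
    rw [hS ⟨((WithLp.equiv 2 (H₁ × H₂)) (z : (WithLp 2 (H₁ × H₂)))).1, hx⟩ h₁ (hCB _), hTz1]
  have claimA : ∀ p : (WithLp 2 (H₁ × H₂)) × (WithLp 2 (H₁ × H₂)), p ∈ T.closure.graph →
      (((WithLp.equiv 2 (H₁ × H₂)) p.1).1, ((WithLp.equiv 2 (H₁ × H₂)) p.2).1) ∈ S.closure.graph := by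
    intro p hp
    rw [← hTcl.graph_closure_eq_closure_graph, ← SetLike.mem_coe,
      Submodule.topologicalClosure_coe] at hp
    have h1 : Φ p ∈ closure (Φ '' (T.graph : Set ((WithLp 2 (H₁ × H₂)) × (WithLp 2 (H₁ × H₂))))) :=
      image_closure_subset_closure_image hΦc ⟨p, hp, rfl⟩
    have h2 : Φ p ∈ closure (S.graph : Set (H₁ × H₁)) := closure_mono hsubA h1
    rw [← Submodule.topologicalClosure_coe, SetLike.mem_coe,
      hScl.graph_closure_eq_closure_graph] at h2
    exact h2
  set ι : H₁ × H₁ → (WithLp 2 (H₁ × H₂)) × (WithLp 2 (H₁ × H₂)) := fun q => ((WithLp.equiv 2 (H₁ × H₂)).symm (q.1, 0), (WithLp.equiv 2 (H₁ × H₂)).symm (q.2, 0)) with hι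
  have hιc : Continuous ι := by
    have h : Continuous (WithLp.equiv 2 (H₁ × H₂)).symm := WithLp.prod_continuous_toLp ..
    exact (h.comp (continuous_fst.prodMk continuous_const)).prodMk
      (h.comp (continuous_snd.prodMk continuous_const))
  have hsubB : ι '' (S.graph : Set (H₁ × H₁)) ⊆ (T.graph : Set ((WithLp 2 (H₁ × H₂)) × (WithLp 2 (H₁ × H₂)))) := by
    rintro _ ⟨q, hq, rfl⟩
    rw [SetLike.mem_coe, LinearPMap.mem_graph_iff'] at hq
    obtain ⟨x, rfl⟩ := hq
    have hx₁ : (x : H₁) ∈ D₁ := hSdomD ▸ x.2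
    have hzdom : (WithLp.equiv 2 (H₁ × H₂)).symm ((x : H₁), 0) ∈ T.domain := by
      rw [hTdom]
      constructor
      · rw [Equiv.apply_symm_apply]; exact hx₁
      · rw [Equiv.apply_symm_apply]; exact D₂.zero_mem
    set z : T.domain := ⟨(WithLp.equiv 2 (H₁ × H₂)).symm ((x : H₁), 0), hzdom⟩ with hz
    have h₁ : ((WithLp.equiv 2 (H₁ × H₂)) (z : (WithLp 2 (H₁ × H₂)))).1 ∈ D₁ := by rw [hz, Equiv.apply_symm_apply]; exact hx₁
    have h₂ : ((WithLp.equiv 2 (H₁ × H₂)) (z : (WithLp 2 (H₁ × H₂)))).2 ∈ D₂ := by rw [hz, Equiv.apply_symm_apply]; exact D₂.zero_mem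
    have hTz := hT z h₁ h₂
    have hv : (WithLp.equiv 2 (H₁ × H₂)) (z : (WithLp 2 (H₁ × H₂))) = ((x : H₁), 0) := (WithLp.equiv 2 (H₁ × H₂)).apply_symm_apply _
    have hval1 : ((⟨((WithLp.equiv 2 (H₁ × H₂)) (z : (WithLp 2 (H₁ × H₂)))).1, h₁⟩ : D₁) : H₁) = (x : H₁) := congrArg Prod.fst hv
    have hval2 : (⟨((WithLp.equiv 2 (H₁ × H₂)) (z : (WithLp 2 (H₁ × H₂)))).2, h₂⟩ : D₂) = (0 : D₂) :=
      Subtype.ext (congrArg Prod.snd hv)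
    have hfst : ((WithLp.equiv 2 (H₁ × H₂)) (T z)).1 = S x := by
      rw [hTz, hS x hx₁ (hCB _)]
      exact congrArg (fun a : D₁ => (B ⟨C a, hCB a⟩ : H₁)) (Subtype.ext hval1)
    have hsnd : ((WithLp.equiv 2 (H₁ × H₂)) (T z)).2 = 0 := by
      rw [hTz]
      show (C ⟨B ⟨((WithLp.equiv 2 (H₁ × H₂)) (z : (WithLp 2 (H₁ × H₂)))).2, h₂⟩, _⟩ : H₂) = 0
      have h0 : (⟨B ⟨((WithLp.equiv 2 (H₁ × H₂)) (z : (WithLp 2 (H₁ × H₂)))).2, h₂⟩, hBC _⟩ : D₁) = (0 : D₁) := by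
        apply Subtype.ext
        show (B ⟨((WithLp.equiv 2 (H₁ × H₂)) (z : (WithLp 2 (H₁ × H₂)))).2, h₂⟩ : H₁) = (0 : H₁)
        rw [hval2, map_zero]
      rw [h0, map_zero]
    have hTzeq : T z = (WithLp.equiv 2 (H₁ × H₂)).symm (S x, 0) := by
      rw [Equiv.eq_symm_apply]
      exact Prod.ext hfst hsnd
    have := T.mem_graph z
    rw [hTzeq] at this
    exact this
  have claimB : ∀ q : H₁ × H₁, q ∈ S.closure.graph →
      ((WithLp.equiv 2 (H₁ × H₂)).symm (q.1, 0), (WithLp.equiv 2 (H₁ × H₂)).symm (q.2, 0)) ∈ T.closure.graph := by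
    intro q hq
    rw [← hScl.graph_closure_eq_closure_graph, ← SetLike.mem_coe,
      Submodule.topologicalClosure_coe] at hq
    have h1 : ι q ∈ closure (ι '' (S.graph : Set (H₁ × H₁))) :=
      image_closure_subset_closure_image hιc ⟨q, hq, rfl⟩
    have h2 : ι q ∈ closure (T.graph : Set ((WithLp 2 (H₁ × H₂)) × (WithLp 2 (H₁ × H₂)))) := closure_mono hsubB h1
    rw [← Submodule.topologicalClosure_coe, SetLike.mem_coe,
      hTcl.graph_closure_eq_closure_graph] at h2
    exact h2
  -- Now the main argument
  unfold EssentiallySelfAdjoint at hTsa ⊢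
  apply LinearPMap.eq_of_eq_graph
  ext ⟨u, v⟩
  rw [mem_adjoint_graph_iff' hdSc]
  constructor
  · -- adjoint ⊆ closure
    intro h
    have hTmem : ((WithLp.equiv 2 (H₁ × H₂)).symm (u, 0), (WithLp.equiv 2 (H₁ × H₂)).symm (v, 0)) ∈ T.closure.adjoint.graph := by
      rw [mem_adjoint_graph_iff' hdTc]
      intro z
      have hz := claimA ((z : (WithLp 2 (H₁ × H₂))), T.closure z) (T.closure.mem_graph z)
      -- hz : (((WithLp.equiv 2 (H₁ × H₂)) z).1, ((WithLp.equiv 2 (H₁ × H₂)) (T.closure z)).1) ∈ S.closure.graph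
      have hzd : ((WithLp.equiv 2 (H₁ × H₂)) (z : (WithLp 2 (H₁ × H₂)))).1 ∈ S.closure.domain := LinearPMap.mem_domain_of_mem_graph hz
      have hzv : ((WithLp.equiv 2 (H₁ × H₂)) (T.closure z)).1 = S.closure ⟨((WithLp.equiv 2 (H₁ × H₂)) (z : (WithLp 2 (H₁ × H₂)))).1, hzd⟩ :=
        (LinearPMap.image_iff hzd).mpr hz
      have h2 := h ⟨((WithLp.equiv 2 (H₁ × H₂)) (z : (WithLp 2 (H₁ × H₂)))).1, hzd⟩
      rw [← hzv] at h2
      simp only [WithLp.equiv_apply] at h2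
      simp only [WithLp.prod_inner_apply, WithLp.equiv_symm_apply, WithLp.ofLp_toLp,
        inner_zero_left, inner_zero_right, add_zero]
      exact h2
    rw [hTsa] at hTmem
    have := claimA _ hTmem
    rw [Equiv.apply_symm_apply, Equiv.apply_symm_apply] at this
    exact this
  · -- closure ⊆ adjoint
    intro h
    have hTmem := claimB (u, v) h
    rw [← hTsa, mem_adjoint_graph_iff' hdTc] at hTmem
    intro x
    have hx := claimB ((x : H₁), S.closure x) (S.closure.mem_graph x)
    have hxd : (WithLp.equiv 2 (H₁ × H₂)).symm ((x : H₁), 0) ∈ T.closure.domain :=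
      LinearPMap.mem_domain_of_mem_graph hx
    have hxv : (WithLp.equiv 2 (H₁ × H₂)).symm (S.closure x, 0) = T.closure ⟨(WithLp.equiv 2 (H₁ × H₂)).symm ((x : H₁), 0), hxd⟩ :=
      (LinearPMap.image_iff hxd).mpr hx
    have := hTmem ⟨(WithLp.equiv 2 (H₁ × H₂)).symm ((x : H₁), 0), hxd⟩
    rw [← hxv] at this
    simp only [WithLp.prod_inner_apply, WithLp.equiv_symm_apply, WithLp.ofLp_toLp,
      inner_zero_left, inner_zero_right, add_zero] at this
    exact this
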